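/- arXiv:2110.09789 — 4 statements merged into one kernel-verified Lean document; each statement's English description precedes it below -/
import Mathlib

section
/- In the ring R_2 = Z_4[ω]/(ω²−2), for every zero divisor x, the multiplicative order of x+1 equals the additive order of x. -/
open Polynomial

/-- The ring `Z₄[ω]` with `ω² = a + bω`, i.e. `Z₄[X]/(X² − (a + bX))`. -/
abbrev Rring (a b : ZMod 4) := AdjoinRoot ((X : (ZMod 4)[X]) ^ 2 - (C a + C b * X))

/-- The element `ω` of `Rring a b`. -/
noncomputable abbrev w (a b : ZMod 4) : Rring a b := AdjoinRoot.root _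

instance : Nontrivial (ZMod 4) := ⟨0, 1, by decide⟩

lemma hw2 : (w 2 0)^2 = 2 := by
  have h : (AdjoinRoot.mk ((X : (ZMod 4)[X]) ^ 2 - (C 2 + C 0 * X))) ((X : (ZMod 4)[X]) ^ 2 - (C 2 + C 0 * X)) = 0 := AdjoinRoot.mk_self
  simp only [map_sub, map_add, map_mul, map_pow, AdjoinRoot.mk_X, AdjoinRoot.mk_C,
    map_ofNat, map_zero, zero_mul, add_zero, sub_eq_zero] at h
  exact h

lemma h4 : (4 : Rring 2 0) = 0 := by
  have h1 : (4 : Rring 2 0) = algebraMap (ZMod 4) (Rring 2 0) 4 := (map_ofNat _ 4).symm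
  rw [h1, show (4 : ZMod 4) = 0 by decide, map_zero]

lemma monic_f : ((X : (ZMod 4)[X]) ^ 2 - (C 2 + C 0 * X)).Monic := by
  have h : (C (2:ZMod 4) + C 0 * X) = C 2 := by simp
  rw [h]
  exact Polynomial.monic_X_pow_sub_C _ (by norm_num)

lemma deg_f : ((X : (ZMod 4)[X]) ^ 2 - (C 2 + C 0 * X)).degree = 2 := by
  have h : (C (2:ZMod 4) + C 0 * X) = C 2 := by simp
  rw [h]
  exact Polynomial.degree_X_pow_sub_C (by norm_num) _

lemma rep (x : Rring 2 0) : ∃ a b : ZMod 4,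
    x = AdjoinRoot.of _ a + AdjoinRoot.of _ b * w 2 0 := by
  obtain ⟨p, rfl⟩ := AdjoinRoot.mk_surjective x
  set f : (ZMod 4)[X] := (X : (ZMod 4)[X]) ^ 2 - (C 2 + C 0 * X) with hf
  refine ⟨(p %ₘ f).coeff 0, (p %ₘ f).coeff 1, ?_⟩
  have h1 : (AdjoinRoot.mk f) p = (AdjoinRoot.mk f) (p %ₘ f) := by
    rw [AdjoinRoot.mk_eq_mk]
    have := Polynomial.modByMonic_eq_sub_mul_div p ((X : (ZMod 4)[X]) ^ 2 - (C 2 + C 0 * X))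
    rw [← hf] at this
    rw [this]
    exact ⟨p /ₘ f, by ring⟩
  have hdeg : (p %ₘ f).degree ≤ 1 := by
    have := Polynomial.degree_modByMonic_lt p monic_f
    rw [← hf, deg_f] at this
    exact Order.le_of_lt_succ (by exact_mod_cast this)
  have h2 := Polynomial.eq_X_add_C_of_degree_le_one hdeg
  rw [h1, h2]
  simp [map_add, map_mul, AdjoinRoot.mk_X, AdjoinRoot.mk_C]
  ring

lemma rep_zero {a b : ZMod 4}
    (h : AdjoinRoot.of _ a + AdjoinRoot.of _ b * w 2 0 = 0) : a = 0 ∧ b = 0 := by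
  set f : (ZMod 4)[X] := (X : (ZMod 4)[X]) ^ 2 - (C 2 + C 0 * X) with hf
  have h1 : (AdjoinRoot.mk f) (C a + C b * X) = 0 := by
    simpa [map_add, map_mul, AdjoinRoot.mk_X, AdjoinRoot.mk_C] using h
  rw [AdjoinRoot.mk_eq_zero] at h1
  have h2 : (C a + C b * X : (ZMod 4)[X]) = 0 := by
    have hbx : (C b * X : (ZMod 4)[X]).degree ≤ 1 := by
      refine (Polynomial.degree_mul_le _ _).trans ?_
      calc (C b).degree + (X : (ZMod 4)[X]).degree ≤ 0 + 1 :=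
            add_le_add Polynomial.degree_C_le Polynomial.degree_X_le
        _ = 1 := by norm_num
    have hlt : (C a + C b * X : (ZMod 4)[X]).degree < f.degree := by
      rw [deg_f]
      calc (C a + C b * X : (ZMod 4)[X]).degree
          ≤ max (C a).degree (C b * X).degree := Polynomial.degree_add_le _ _
        _ ≤ 1 := max_le (Polynomial.degree_C_le.trans (by norm_num)) hbx
        _ < 2 := by norm_num
    rw [← (Polynomial.modByMonic_eq_self_iff monic_f).2 hlt,
      (Polynomial.modByMonic_eq_zero_iff_dvd monic_f).2 h1]
  constructor
  · have := congrArg (fun q => Polynomial.coeff q 0) h2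
    simpa using this
  · have := congrArg (fun q => Polynomial.coeff q 1) h2
    simpa using this

lemma of0 : AdjoinRoot.of ((X : (ZMod 4)[X]) ^ 2 - (C 2 + C 0 * X)) (0 : ZMod 4) = 0 := map_zero _
lemma of1 : AdjoinRoot.of ((X : (ZMod 4)[X]) ^ 2 - (C 2 + C 0 * X)) (1 : ZMod 4) = 1 := map_one _
lemma of2 : AdjoinRoot.of ((X : (ZMod 4)[X]) ^ 2 - (C 2 + C 0 * X)) (2 : ZMod 4) = 2 := map_ofNat _ 2
lemma of3 : AdjoinRoot.of ((X : (ZMod 4)[X]) ^ 2 - (C 2 + C 0 * X)) (3 : ZMod 4) = 3 := map_ofNat _ 3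

lemma ne22 : (2 : Rring 2 0) + 2 * w 2 0 ≠ 0 := by
  intro h
  obtain ⟨h1, -⟩ := rep_zero (a := 2) (b := 2) (by rw [of2]; exact h)
  exact absurd h1 (by decide)

lemma ne02 : (2 : Rring 2 0) * w 2 0 ≠ 0 := by
  intro h
  obtain ⟨-, h1⟩ := rep_zero (a := 0) (b := 2) (by rw [of0, of2, zero_add]; exact h)
  exact absurd h1 (by decide)

lemma ne20 : (2 : Rring 2 0) ≠ 0 := by
  intro h
  obtain ⟨h1, -⟩ := rep_zero (a := 2) (b := 0) (by rw [of2, of0, zero_mul, add_zero]; exact h)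
  exact absurd h1 (by decide)

/-- In `R₂`, for every zero divisor `x`, the multiplicative order of `x + 1`
equals the additive order of `x`. -/
theorem stmt2 (x : Rring 2 0) (hx : ¬ IsUnit x) :
    orderOf (x + 1) = addOrderOf x := by
  have h2 := hw2
  have h44 := h4
  obtain ⟨a, b, rfl⟩ := rep x
  have hcases : ∀ c : ZMod 4, c = 0 ∨ c = 1 ∨ c = 2 ∨ c = 3 := by decide
  rcases hcases a with rfl | rfl | rfl | rfl <;>
    rcases hcases b with rfl | rfl | rfl | rfl <;>
    simp only [of0, of1, of2, of3, zero_add, add_zero, zero_mul, one_mul, mul_zero] at hx ⊢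
  -- (0,0)
  · simp
  -- (0,1)
  · refine (orderOf_eq_prime_pow (p := 2) (n := 1) ?_ ?_).trans
      ((addOrderOf_eq_prime_pow (p := 2) (n := 1) ?_ ?_).symm)
    · intro h
      rw [pow_one] at h
      exact ne22 (by linear_combination h - h2)
    · linear_combination ((w 2 0)^2 + 4*(w 2 0) + 8) * h2 + (3*(w 2 0) + 4) * h44
    · intro h
      rw [pow_one, nsmul_eq_mul] at h
      push_cast at h
      exact ne02 (by linear_combination h)
    · rw [nsmul_eq_mul]
      push_cast
      linear_combination (w 2 0) * h44
  -- (0,2)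
  · refine (orderOf_eq_prime (p := 2) ?_ ?_).trans
      ((addOrderOf_eq_prime (p := 2) ?_ ?_).symm)
    · linear_combination ((w 2 0)^2 + (w 2 0)) * h44
    · intro h
      exact ne02 (by linear_combination h)
    · rw [nsmul_eq_mul]
      push_cast
      linear_combination (w 2 0) * h44
    · exact ne02
  -- (0,3)
  · refine (orderOf_eq_prime_pow (p := 2) (n := 1) ?_ ?_).trans
      ((addOrderOf_eq_prime_pow (p := 2) (n := 1) ?_ ?_).symm)
    · intro h
      rw [pow_one] at h
      exact ne22 (by linear_combination h - 9*h2 - (4 + w 2 0) * h44)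
    · linear_combination (81*(w 2 0)^2 + 108*(w 2 0) + 216) * h2 + (57*(w 2 0) + 108) * h44
    · intro h
      rw [pow_one, nsmul_eq_mul] at h
      push_cast at h
      exact ne02 (by linear_combination h - (w 2 0) * h44)
    · rw [nsmul_eq_mul]
      push_cast
      linear_combination 3*(w 2 0) * h44
  -- (1,0)
  · exact absurd isUnit_one hx
  -- (1,1)
  · exact absurd (IsUnit.of_mul_eq_one (3 + w 2 0)
      (by linear_combination h2 + (1 + w 2 0) * h44)) hx
  -- (1,2)
  · exact absurd (IsUnit.of_mul_eq_one (1 + 2 * w 2 0)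
      (by linear_combination 4*h2 + (2 + w 2 0) * h44)) hx
  -- (1,3)
  · exact absurd (IsUnit.of_mul_eq_one (3 + 3 * w 2 0)
      (by linear_combination 9*h2 + (5 + 3*(w 2 0)) * h44)) hx
  -- (2,0)
  · refine (orderOf_eq_prime (p := 2) ?_ ?_).trans
      ((addOrderOf_eq_prime (p := 2) ?_ ?_).symm)
    · linear_combination 2 * h44
    · intro h
      exact ne20 (by linear_combination h)
    · rw [nsmul_eq_mul]
      push_cast
      linear_combination h44
    · exact ne20
  -- (2,1)
  · refine (orderOf_eq_prime_pow (p := 2) (n := 1) ?_ ?_).trans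
      ((addOrderOf_eq_prime_pow (p := 2) (n := 1) ?_ ?_).symm)
    · intro h
      rw [pow_one] at h
      exact ne22 (by linear_combination h - h2 - (2 + w 2 0) * h44)
    · linear_combination ((w 2 0)^2 + 12*(w 2 0) + 56) * h2 + (33*(w 2 0) + 48) * h44
    · intro h
      rw [pow_one, nsmul_eq_mul] at h
      push_cast at h
      exact ne02 (by linear_combination h - h44)
    · rw [nsmul_eq_mul]
      push_cast
      linear_combination (2 + w 2 0) * h44
  -- (2,2)
  · refine (orderOf_eq_prime (p := 2) ?_ ?_).trans
      ((addOrderOf_eq_prime (p := 2) ?_ ?_).symm)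
    · linear_combination 4*h2 + (4 + 3*(w 2 0)) * h44
    · intro h
      exact ne22 (by linear_combination h)
    · rw [nsmul_eq_mul]
      push_cast
      linear_combination (1 + w 2 0) * h44
    · exact ne22
  -- (2,3)
  · refine (orderOf_eq_prime_pow (p := 2) (n := 1) ?_ ?_).trans
      ((addOrderOf_eq_prime_pow (p := 2) (n := 1) ?_ ?_).symm)
    · intro h
      rw [pow_one] at h
      exact ne22 (by linear_combination h - 9*h2 - (6 + 4*(w 2 0)) * h44)
    · linear_combination (81*(w 2 0)^2 + 324*(w 2 0) + 648) * h2 + (243*(w 2 0) + 344) * h44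
    · intro h
      rw [pow_one, nsmul_eq_mul] at h
      push_cast at h
      exact ne02 (by linear_combination h - (1 + w 2 0) * h44)
    · rw [nsmul_eq_mul]
      push_cast
      linear_combination (2 + 3*(w 2 0)) * h44
  -- (3,0)
  · exact absurd (IsUnit.of_mul_eq_one 3 (by linear_combination 2 * h44)) hx
  -- (3,1)
  · exact absurd (IsUnit.of_mul_eq_one (1 + w 2 0)
      (by linear_combination h2 + (1 + w 2 0) * h44)) hx
  -- (3,2)
  · exact absurd (IsUnit.of_mul_eq_one (3 + 2 * w 2 0)
      (by linear_combination 4*h2 + (4 + 3*(w 2 0)) * h44)) hx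
  -- (3,3)
  · exact absurd (IsUnit.of_mul_eq_one (1 + 3 * w 2 0)
      (by linear_combination 9*h2 + (5 + 3*(w 2 0)) * h44)) hx
end

section
/- Let C = ⟨a(x), ωb(x)⟩ be a cyclic code of odd length n over R_{2+2ω}. If the all-(2+2ω) word (2+2ω)(1 + x + … + x^{n−1}) belongs to C and both a(x) and b(x) are self-reciprocal, then C is reverse-complement closed. -/
set_option maxHeartbeats 1000000


open Polynomial

/-- The quotient ring `R_{2+2ω}[x]/(xⁿ − 1)` in which cyclic codes of length `n` live. -/
noncomputable abbrev quotMk (n : ℕ) :=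
  Ideal.Quotient.mk (Ideal.span {(X : (Rring 2 2)[X]) ^ n - 1})

/-- The cyclic code `⟨a(x), ωb(x)⟩ ⊆ R_{2+2ω}[x]/(xⁿ−1)`, where `a, b ∈ Z₄[x]`. -/
noncomputable def codeIdeal (n : ℕ) (a b : (ZMod 4)[X]) :
    Ideal ((Rring 2 2)[X] ⧸ Ideal.span {(X : (Rring 2 2)[X]) ^ n - 1}) :=
  Ideal.span
    { quotMk n (a.map (algebraMap (ZMod 4) (Rring 2 2))),
      quotMk n (C (w 2 2) * b.map (algebraMap (ZMod 4) (Rring 2 2))) }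

/-- Membership of a word `(c₀, …, c_{n−1})` in the cyclic code:
its associated polynomial `∑ cᵢ xⁱ` lies in the ideal. -/
noncomputable def memCode (n : ℕ) (a b : (ZMod 4)[X]) (c : Fin n → Rring 2 2) : Prop :=
  quotMk n (∑ i : Fin n, C (c i) * X ^ (i : ℕ)) ∈ codeIdeal n a b

/-- A polynomial over `Z₄` is self-reciprocal if `g* = v·g` for some unit `v ∈ Z₄`. -/
def SelfReciprocal (g : (ZMod 4)[X]) : Prop :=
  ∃ v : (ZMod 4)ˣ, g.reverse = C (v : ZMod 4) * g

/- ### Auxiliary development -/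

namespace Stmt9Aux

noncomputable section

variable (n : ℕ)

/-- `x^n = 1` in the quotient. -/
lemma hXn : (quotMk n X) ^ n = 1 := by
  have h : quotMk n ((X : (Rring 2 2)[X]) ^ n - 1) = 0 :=
    Ideal.Quotient.eq_zero_iff_mem.mpr (Ideal.subset_span (Set.mem_singleton _))
  rw [map_sub, map_pow, map_one, sub_eq_zero] at h
  exact h

/-- The substitution `x ↦ x^(n-1)` as a ring hom from polynomials to the quotient. -/
def psi : (Rring 2 2)[X] →+* ((Rring 2 2)[X] ⧸ Ideal.span {(X : (Rring 2 2)[X]) ^ n - 1}) :=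
  eval₂RingHom ((quotMk n).comp Polynomial.C) ((quotMk n X) ^ (n - 1))

lemma psi_C (c : Rring 2 2) : psi n (C c) = quotMk n (C c) := by
  simp [psi]

lemma psi_X : psi n X = (quotMk n X) ^ (n - 1) := by
  simp [psi]

lemma psi_rel : psi n ((X : (Rring 2 2)[X]) ^ n - 1) = 0 := by
  rw [map_sub, map_pow, map_one, psi_X, ← pow_mul, Nat.mul_comm, pow_mul, hXn, one_pow,
    sub_self]

/-- The induced endomorphism `φ` of the quotient ring, `x ↦ x^(n-1)`. -/
def phi : ((Rring 2 2)[X] ⧸ Ideal.span {(X : (Rring 2 2)[X]) ^ n - 1}) →+*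
    ((Rring 2 2)[X] ⧸ Ideal.span {(X : (Rring 2 2)[X]) ^ n - 1}) :=
  Ideal.Quotient.lift _ (psi n) (by
    intro f hf
    rw [Ideal.mem_span_singleton] at hf
    obtain ⟨g, rfl⟩ := hf
    rw [map_mul, psi_rel, zero_mul])

lemma phi_mk (f : (Rring 2 2)[X]) : phi n (quotMk n f) = psi n f :=
  Ideal.Quotient.lift_mk _ _ _

lemma pow_eq (hn : 0 < n) {i m : ℕ} (him : i ≤ m) :
    (quotMk n X) ^ (m + (n - 1) * i) = (quotMk n X) ^ (m - i) := by
  have h1 : i ≤ n * i := Nat.le_mul_of_pos_left i hn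
  have h2 : (n - 1) * i = n * i - i := by rw [Nat.sub_mul, one_mul]
  have h3 : m + (n - 1) * i = (m - i) + n * i := by omega
  rw [h3, pow_add, pow_mul, hXn, one_pow, mul_one]

/-- Key identity: `x^m · ψ(p) = reflect m p` in the quotient. -/
lemma key (hn : 0 < n) (p : (Rring 2 2)[X]) (m : ℕ) (hp : p.natDegree ≤ m) :
    (quotMk n X) ^ m * psi n p = quotMk n (reflect m p) := by
  have hrep : p = ∑ i ∈ Finset.range (m + 1), C (p.coeff i) * X ^ i := by
    conv_lhs => rw [p.as_sum_range' (m + 1) (Nat.lt_succ_of_le hp)]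
    exact Finset.sum_congr rfl fun i _ => (C_mul_X_pow_eq_monomial).symm
  have hrefl : ∀ s : Finset ℕ,
      reflect m (∑ i ∈ s, C (p.coeff i) * X ^ i)
        = ∑ i ∈ s, reflect m (C (p.coeff i) * X ^ i) := by
    intro s
    classical
    induction s using Finset.induction with
    | empty => simp
    | insert _ _ h ih => rw [Finset.sum_insert h, Finset.sum_insert h, reflect_add, ih]
  conv_lhs => rw [hrep]
  conv_rhs => rw [hrep]
  rw [hrefl, map_sum, map_sum, Finset.mul_sum]
  refine Finset.sum_congr rfl fun i hi => ?_
  have him : i ≤ m := Nat.lt_succ_iff.mp (Finset.mem_range.mp hi)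
  rw [reflect_C_mul_X_pow, revAt_le him, map_mul, map_pow, map_mul, psi_C, map_pow, psi_X,
    ← pow_mul, mul_comm ((quotMk n X) ^ m), mul_assoc, ← pow_add,
    show (n - 1) * i + m = m + (n - 1) * i from Nat.add_comm _ _, pow_eq n hn him]

/-- `ψ` of a self-reciprocal generator is a multiple of the generator. -/
lemma psi_gen (hn : 0 < n) (g : (ZMod 4)[X]) (hsg : SelfReciprocal g) :
    ∃ u, psi n (g.map (algebraMap (ZMod 4) (Rring 2 2)))
      = u * quotMk n (g.map (algebraMap (ZMod 4) (Rring 2 2))) := by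
  obtain ⟨v, hv⟩ := hsg
  set σ := algebraMap (ZMod 4) (Rring 2 2)
  set m := g.natDegree with hm
  have hdeg : (g.map σ).natDegree ≤ m := natDegree_map_le
  have h1 := key n hn (g.map σ) m hdeg
  have h2 : reflect m (g.map σ) = C (σ v) * g.map σ := by
    rw [reflect_map, show reflect m g = g.reverse from rfl, hv, Polynomial.map_mul, map_C]
  rw [h2, map_mul] at h1
  refine ⟨((quotMk n X) ^ (n - 1)) ^ m * quotMk n (C (σ v)), ?_⟩
  have hu : ((quotMk n X) ^ (n - 1)) ^ m * (quotMk n X) ^ m = 1 := by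
    rw [← mul_pow, ← pow_succ, Nat.sub_add_cancel hn, hXn, one_pow]
  calc psi n (g.map σ)
      = (((quotMk n X) ^ (n - 1)) ^ m * (quotMk n X) ^ m) * psi n (g.map σ) := by
        rw [hu, one_mul]
    _ = ((quotMk n X) ^ (n - 1)) ^ m * ((quotMk n X) ^ m * psi n (g.map σ)) := by ring
    _ = ((quotMk n X) ^ (n - 1)) ^ m * (quotMk n (C (σ v)) * quotMk n (g.map σ)) := by rw [h1]
    _ = _ := by ring

/-- `φ` maps the code ideal into itself. -/
lemma phi_mem (hn : 0 < n) (a b : (ZMod 4)[X]) (hsa : SelfReciprocal a)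
    (hsb : SelfReciprocal b) :
    ∀ f ∈ codeIdeal n a b, phi n f ∈ codeIdeal n a b := by
  intro f hf
  set σ := algebraMap (ZMod 4) (Rring 2 2)
  obtain ⟨ua, hua⟩ := psi_gen n hn a hsa
  obtain ⟨ub, hub⟩ := psi_gen n hn b hsb
  have hga : quotMk n (a.map σ) ∈ codeIdeal n a b :=
    Ideal.subset_span (Set.mem_insert _ _)
  have hgb : quotMk n (C (w 2 2) * b.map σ) ∈ codeIdeal n a b :=
    Ideal.subset_span (Set.mem_insert_of_mem _ (Set.mem_singleton _))
  have h1 : phi n (quotMk n (a.map σ)) ∈ codeIdeal n a b := by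
    rw [phi_mk, hua]
    exact Ideal.mul_mem_left _ _ hga
  have h2 : phi n (quotMk n (C (w 2 2) * b.map σ)) ∈ codeIdeal n a b := by
    rw [phi_mk, map_mul, psi_C, hub]
    have : quotMk n (C (w 2 2)) * (ub * quotMk n (b.map σ))
        = ub * quotMk n (C (w 2 2) * b.map σ) := by rw [map_mul]; ring
    rw [this]
    exact Ideal.mul_mem_left _ _ hgb
  refine Submodule.span_induction (p := fun x _ => phi n x ∈ codeIdeal n a b)
    ?_ ?_ ?_ ?_ hf
  · intro x hx
    rcases hx with rfl | hx
    · exact h1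
    · rw [Set.mem_singleton_iff] at hx
      subst hx
      exact h2
  · simp
  · intro x y _ _ hx hy
    rw [map_add]
    exact Ideal.add_mem _ hx hy
  · intro r x _ hx
    rw [smul_eq_mul, map_mul]
    exact Ideal.mul_mem_left _ _ hx

/-- The reversed word corresponds to `x^(n-1) · φ(word)`. -/
lemma rev_word (hn : 0 < n) (c : Fin n → Rring 2 2) :
    quotMk n (∑ i : Fin n, C (c (Fin.rev i)) * X ^ (i : ℕ))
      = (quotMk n X) ^ (n - 1) * phi n (quotMk n (∑ i : Fin n, C (c i) * X ^ (i : ℕ))) := by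
  rw [phi_mk, map_sum, map_sum, Finset.mul_sum]
  refine Eq.trans (Fintype.sum_bijective Fin.rev Fin.rev_involutive.bijective _
    (fun i : Fin n => quotMk n (C (c i) * X ^ ((Fin.rev i : Fin n) : ℕ)))
    (fun i => by simp only [Fin.rev_rev])) ?_
  refine Finset.sum_congr rfl fun i _ => ?_
  have hi : (i : ℕ) < n := i.isLt
  have hrv : ((Fin.rev i : Fin n) : ℕ) = n - 1 - (i : ℕ) := by
    show n - ((i : ℕ) + 1) = n - 1 - (i : ℕ)
    omega
  have h1 : (i : ℕ) ≤ n * i := Nat.le_mul_of_pos_left _ hn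
  have h2 : (n - 1) * (i : ℕ) = n * i - i := by rw [Nat.sub_mul, one_mul]
  have hexp : (n - 1) + (n - 1) * (i : ℕ) = (n - 1 - (i : ℕ)) + n * i := by omega
  show quotMk n (C (c i) * X ^ ((Fin.rev i : Fin n) : ℕ)) = _
  rw [map_mul, map_pow, map_mul, psi_C, map_pow, psi_X, hrv, ← pow_mul, ← mul_assoc,
    mul_comm ((quotMk n X) ^ (n - 1)), mul_assoc, ← pow_add, hexp, pow_add, pow_mul, hXn,
    one_pow, mul_one]

end

end Stmt9Aux

/-- If the all-`(2+2ω)` word is in a cyclic code `C = ⟨a(x), ωb(x)⟩` of odd length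
over `R_{2+2ω}` and both `a, b` are self-reciprocal, then `C` is reverse-complement
closed. -/
theorem stmt9 (n : ℕ) (hodd : Odd n) (a b : (ZMod 4)[X])
    (hba : b ∣ a) (han : a ∣ X ^ n - 1)
    (hconst : memCode n a b (fun _ => 2 + 2 * w 2 2))
    (hsa : SelfReciprocal a) (hsb : SelfReciprocal b) :
    ∀ c : Fin n → Rring 2 2, memCode n a b c →
      memCode n a b (fun i => c (Fin.rev i) + (2 + 2 * w 2 2)) := by
  intro c hc
  have hn : 0 < n := hodd.pos
  unfold memCode at hc hconst ⊢
  have hsplit : (∑ i : Fin n, C ((fun i => c (Fin.rev i) + (2 + 2 * w 2 2)) i) * X ^ (i : ℕ))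
      = (∑ i : Fin n, C (c (Fin.rev i)) * X ^ (i : ℕ))
        + ∑ i : Fin n, C ((fun _ : Fin n => 2 + 2 * w 2 2) i) * X ^ (i : ℕ) := by
    rw [← Finset.sum_add_distrib]
    exact Finset.sum_congr rfl fun i _ => by rw [C_add, add_mul]
  rw [hsplit, map_add]
  refine Ideal.add_mem _ ?_ hconst
  rw [Stmt9Aux.rev_word n hn c]
  exact Ideal.mul_mem_left _ _ (Stmt9Aux.phi_mem n hn a b hsa hsb _ hc)
end

section
/- Let ψ: R_2 → Z_4² be the Gray map ψ(a+ωb) = (b, a+b), extended coordinatewise to R_2^n → Z_4^{2n}. For any linear code C over R_2 = Z_4[ω]/(ω²−2), ψ(C^⊥) = ψ(C)^⊥, where duals are taken with respect to the standard inner products over R_2 and Z_4 respectively. -/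
open Polynomial

lemma pmonic (a b : ZMod 4) : ((X : (ZMod 4)[X]) ^ 2 - (C a + C b * X)).Monic := by
  monicity!

/-- The Gray map `ψ : R_θ → Z₄²`, `ψ(a + ωb) = (b, a + b)`, computed from the
canonical representative of degree `< 2`. -/
noncomputable def psi (a b : ZMod 4) (z : Rring a b) : ZMod 4 × ZMod 4 :=
  ((AdjoinRoot.modByMonicHom (pmonic a b) z).coeff 1,
    (AdjoinRoot.modByMonicHom (pmonic a b) z).coeff 0 +
      (AdjoinRoot.modByMonicHom (pmonic a b) z).coeff 1)

/-- The Gray map extended coordinatewise to words. -/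
noncomputable def Psi (a b : ZMod 4) (n : ℕ) (c : Fin n → Rring a b) :
    Fin n → ZMod 4 × ZMod 4 :=
  fun i => psi a b (c i)

/-- The dual of a set of words over `R_θ` w.r.t. the standard inner product. -/
def dualR (a b : ZMod 4) (n : ℕ) (S : Set (Fin n → Rring a b)) :
    Set (Fin n → Rring a b) :=
  {v | ∀ u ∈ S, ∑ i : Fin n, v i * u i = 0}

/-- The dual of a set of words over `Z₄²ⁿ` w.r.t. the standard inner product. -/
def dualZ (n : ℕ) (S : Set (Fin n → ZMod 4 × ZMod 4)) :
    Set (Fin n → ZMod 4 × ZMod 4) :=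
  {v | ∀ u ∈ S, ∑ i : Fin n, ((v i).1 * (u i).1 + (v i).2 * (u i).2) = 0}

noncomputable def el (p q : ZMod 4) : Rring 2 0 :=
  AdjoinRoot.mk _ (C p + C q * X)

lemma m_el (p q : ZMod 4) :
    AdjoinRoot.modByMonicHom (pmonic 2 0) (el p q) = C p + C q * X := by
  rw [el, AdjoinRoot.modByMonicHom_mk,
    Polynomial.modByMonic_eq_self_iff (pmonic 2 0), deg_f]
  apply lt_of_le_of_lt (Polynomial.degree_add_le _ _)
  apply max_lt
  · exact lt_of_le_of_lt (degree_C_le) (by norm_num)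
  · exact lt_of_le_of_lt (degree_C_mul_X_le _) (by norm_num)

noncomputable def c0 (z : Rring 2 0) : ZMod 4 :=
  (AdjoinRoot.modByMonicHom (pmonic 2 0) z).coeff 0
noncomputable def c1 (z : Rring 2 0) : ZMod 4 :=
  (AdjoinRoot.modByMonicHom (pmonic 2 0) z).coeff 1

lemma c0_el (p q : ZMod 4) : c0 (el p q) = p := by simp [c0, m_el]
lemma c1_el (p q : ZMod 4) : c1 (el p q) = q := by simp [c1, m_el, coeff_one]

lemma el_eq (z : Rring 2 0) : el (c0 z) (c1 z) = z := by
  obtain ⟨P, rfl⟩ := AdjoinRoot.mk_surjective z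
  have hd : (AdjoinRoot.modByMonicHom (pmonic 2 0) (AdjoinRoot.mk _ P)).degree ≤ 1 := by
    rw [AdjoinRoot.modByMonicHom_mk]
    have := Polynomial.degree_modByMonic_lt P (pmonic 2 0)
    rw [deg_f] at this
    exact Order.lt_succ_iff.mp (by exact_mod_cast this)
  have h2 := Polynomial.eq_X_add_C_of_degree_le_one hd
  have key : C (c0 (AdjoinRoot.mk _ P)) + C (c1 (AdjoinRoot.mk _ P)) * X
      = AdjoinRoot.modByMonicHom (pmonic 2 0) (AdjoinRoot.mk _ P) := by
    rw [c0, c1]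
    conv_rhs => rw [h2]
    ring
  rw [el, key]
  exact AdjoinRoot.mk_leftInverse (pmonic 2 0) _

lemma el_zero : el 0 0 = 0 := by simp [el]

lemma el_eq_zero {p q : ZMod 4} (h : el p q = 0) : p = 0 ∧ q = 0 := by
  have h0 := congrArg c0 h
  have h1 := congrArg c1 h
  rw [c0_el] at h0; rw [c1_el] at h1
  rw [← el_zero, c0_el] at h0
  rw [← el_zero, c1_el] at h1
  exact ⟨h0, h1⟩

lemma el_mul (p q p' q' : ZMod 4) :
    el p q * el p' q' = el (p * p' + 2 * (q * q')) (p * q' + q * p') := by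
  rw [el, el, el, ← map_mul, AdjoinRoot.mk_eq_mk]
  refine ⟨C (q * q'), ?_⟩
  simp only [map_add, map_mul, map_ofNat, map_zero]
  ring

noncomputable def elH : ZMod 4 × ZMod 4 →+ Rring 2 0 where
  toFun z := el z.1 z.2
  map_zero' := el_zero
  map_add' x y := by
    show el (x.1 + y.1) (x.2 + y.2) = el x.1 x.2 + el y.1 y.2
    rw [el, el, el, ← map_add]
    congr 1
    simp only [map_add]
    ring

lemma w_eq : w 2 0 = el 0 1 := by simp [el]
lemma psi_el (p q : ZMod 4) : psi 2 0 (el p q) = (q, p + q) := by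
  show (c1 (el p q), c0 (el p q) + c1 (el p q)) = _
  rw [c0_el, c1_el]

lemma sum_el {n : ℕ} (F G : Fin n → ZMod 4) :
    ∑ i : Fin n, el (F i) (G i) = el (∑ i, F i) (∑ i, G i) := by
  have h := map_sum elH (fun i => (F i, G i)) Finset.univ
  simp only [elH, AddMonoidHom.coe_mk, ZeroHom.coe_mk] at h
  rw [Prod.fst_sum, Prod.snd_sum] at h
  exact h.symm

lemma key {n : ℕ} (v u : Fin n → Rring 2 0) :
    ∑ i : Fin n, v i * u i =
      el (∑ i : Fin n, (c0 (v i) * c0 (u i) + 2 * (c1 (v i) * c1 (u i))))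
         (∑ i : Fin n, (c0 (v i) * c1 (u i) + c1 (v i) * c0 (u i))) := by
  rw [← sum_el]
  refine Finset.sum_congr rfl fun i _ => ?_
  conv_lhs => rw [← el_eq (v i), ← el_eq (u i)]
  rw [el_mul]

lemma gray_inner {n : ℕ} (v u : Fin n → Rring 2 0) :
    ∑ i : Fin n, ((Psi 2 0 n v i).1 * (Psi 2 0 n u i).1
        + (Psi 2 0 n v i).2 * (Psi 2 0 n u i).2)
      = c0 (∑ i : Fin n, v i * u i) + c1 (∑ i : Fin n, v i * u i) := by
  rw [key, c0_el, c1_el, ← Finset.sum_add_distrib]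
  refine Finset.sum_congr rfl fun i _ => ?_
  show c1 (v i) * c1 (u i) + (c0 (v i) + c1 (v i)) * (c0 (u i) + c1 (u i)) = _
  ring

/-- For any linear code `C` over `R₂ = Z₄[ω]/(ω²−2)`, the Gray image of the dual is
the dual of the Gray image: `ψ(C^⊥) = ψ(C)^⊥`. -/
theorem stmt12 (n : ℕ) (Ccode : Submodule (Rring 2 0) (Fin n → Rring 2 0)) :
    Psi 2 0 n '' dualR 2 0 n (Ccode : Set (Fin n → Rring 2 0)) =
      dualZ n (Psi 2 0 n '' (Ccode : Set (Fin n → Rring 2 0))) := by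
  ext y
  constructor
  · rintro ⟨v, hv, rfl⟩ u' ⟨u, hu, rfl⟩
    rw [gray_inner, hv u hu]
    simp [c0, c1]
  · intro hy
    set v : Fin n → Rring 2 0 := fun i => el ((y i).2 - (y i).1) ((y i).1) with hvdef
    have hPsi : Psi 2 0 n v = y := by
      funext i
      show psi 2 0 (el ((y i).2 - (y i).1) ((y i).1)) = y i
      rw [psi_el, Prod.ext_iff]
      constructor <;> ring
    refine ⟨v, ?_, hPsi⟩
    intro u hu
    have h1 := hy (Psi 2 0 n u) ⟨u, hu, rfl⟩
    have h2 := hy (Psi 2 0 n (w 2 0 • u)) ⟨w 2 0 • u, Submodule.smul_mem _ _ hu, rfl⟩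
    rw [← hPsi, gray_inner] at h1 h2
    have hT' : (∑ i : Fin n, v i * (w 2 0 • u) i) = w 2 0 * ∑ i : Fin n, v i * u i := by
      rw [Finset.mul_sum]
      refine Finset.sum_congr rfl fun i _ => ?_
      rw [Pi.smul_apply, smul_eq_mul]; ring
    set T := ∑ i : Fin n, v i * u i with hTdef
    rw [hT'] at h2
    have hw : w 2 0 * T = el (2 * c1 T) (c0 T) := by
      conv_lhs => rw [w_eq, ← el_eq T]
      rw [el_mul]
      congr 1 <;> ring
    rw [hw, c0_el, c1_el] at h2
    have hc1 : c1 T = 0 := by linear_combination h2 - h1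
    have hc0 : c0 T = 0 := by linear_combination h1 - hc1
    rw [← el_eq T, hc0, hc1, el_zero]
end

section
/- If C is a self-dual linear code over R_j = Z_4[ω]/(ω²−j) with j ∈ {2, 2ω}, then its Gray image ψ(C), where ψ(a+ωb) = (b, a+b) applied coordinatewise, is a self-dual code over Z_4. -/
open Polynomial

noncomputable def e (a b x y : ZMod 4) : Rring a b :=
  algebraMap _ _ x + algebraMap _ _ y * w a b

lemma degg (a b : ZMod 4) : ((X : (ZMod 4)[X]) ^ 2 - (C a + C b * X)).degree = 2 := by
  compute_degree!

lemma hrep (a b x y : ZMod 4) :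
    AdjoinRoot.modByMonicHom (pmonic a b) (e a b x y) = C x + C y * X := by
  have h1 : e a b x y = AdjoinRoot.mk _ (C x + C y * X) := by
    simp [e, AdjoinRoot.algebraMap_eq, AdjoinRoot.mk_C, w, map_add, map_mul, AdjoinRoot.mk_X]
  rw [h1, AdjoinRoot.modByMonicHom_mk]
  rw [Polynomial.modByMonic_eq_self_iff (pmonic a b), degg]
  apply lt_of_le_of_lt (Polynomial.degree_add_le _ _)
  rw [max_lt_iff]
  refine ⟨lt_of_le_of_lt degree_C_le (by norm_num), ?_⟩
  refine lt_of_le_of_lt (Polynomial.degree_mul_le _ _) ?_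
  calc (C y).degree + (X : (ZMod 4)[X]).degree ≤ 0 + 1 :=
        add_le_add degree_C_le degree_X_le
    _ < 2 := by norm_num

lemma hsurj (a b : ZMod 4) (z : Rring a b) :
    z = e a b ((AdjoinRoot.modByMonicHom (pmonic a b) z).coeff 0)
      ((AdjoinRoot.modByMonicHom (pmonic a b) z).coeff 1) := by
  obtain ⟨f, rfl⟩ := AdjoinRoot.mk_surjective (g := (X : (ZMod 4)[X]) ^ 2 - (C a + C b * X)) z
  rw [AdjoinRoot.modByMonicHom_mk]
  set p := f %ₘ ((X : (ZMod 4)[X]) ^ 2 - (C a + C b * X)) with hp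
  have hlt : p.degree < 2 := by
    rw [← degg a b]; exact Polynomial.degree_modByMonic_lt f (pmonic a b)
  have hle : p.degree ≤ 1 := by
    cases hd : p.degree with
    | bot => exact bot_le
    | coe m =>
      rw [hd] at hlt
      have h2 : ((2:ℕ) : WithBot ℕ) = (2 : WithBot ℕ) := rfl
      have h1 : ((1:ℕ) : WithBot ℕ) = (1 : WithBot ℕ) := rfl
      rw [← h2] at hlt
      rw [← h1]
      have hm : m < 2 := WithBot.coe_lt_coe.mp hlt
      exact WithBot.coe_le_coe.mpr (by omega)
  have hpeq : p = C (p.coeff 1) * X + C (p.coeff 0) := eq_X_add_C_of_degree_le_one hle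
  have h2 : AdjoinRoot.mk ((X : (ZMod 4)[X]) ^ 2 - (C a + C b * X)) f = AdjoinRoot.mk ((X : (ZMod 4)[X]) ^ 2 - (C a + C b * X)) p := by
    rw [AdjoinRoot.mk_eq_mk]
    refine ⟨f /ₘ ((X : (ZMod 4)[X]) ^ 2 - (C a + C b * X)), ?_⟩
    have hmd := Polynomial.modByMonic_add_div f ((X : (ZMod 4)[X]) ^ 2 - (C a + C b * X))
    linear_combination -hmd
  rw [h2]
  conv_lhs => rw [hpeq]
  simp only [e, AdjoinRoot.algebraMap_eq, w, map_add, map_mul, AdjoinRoot.mk_X,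
    AdjoinRoot.mk_C]
  ring

lemma hr2 (a b : ZMod 4) : w a b ^ 2 = algebraMap _ _ a + algebraMap _ _ b * w a b := by
  have := AdjoinRoot.eval₂_root ((X : (ZMod 4)[X]) ^ 2 - (C a + C b * X))
  simp only [eval₂_sub, eval₂_pow, eval₂_X, eval₂_add, eval₂_mul, eval₂_C, sub_eq_zero] at this
  simpa [AdjoinRoot.algebraMap_eq, w] using this

lemma hmul (a b x y z t : ZMod 4) :
    e a b x y * e a b z t = e a b (x*z + a*(y*t)) (x*t + y*z + b*(y*t)) := by
  simp only [e, map_add, map_mul]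
  have h := hr2 a b
  ring_nf
  linear_combination (algebraMap (ZMod 4) (Rring a b) y * algebraMap (ZMod 4) (Rring a b) t) * h

noncomputable def g (a b : ZMod 4) (z : Rring a b) : ZMod 4 :=
  (AdjoinRoot.modByMonicHom (pmonic a b) z).coeff 0 +
    (AdjoinRoot.modByMonicHom (pmonic a b) z).coeff 1

lemma g_e (a b x y : ZMod 4) : g a b (e a b x y) = x + y := by
  simp [g, hrep, coeff_add, coeff_C]

lemma psi_e (a b x y : ZMod 4) : psi a b (e a b x y) = (y, x + y) := by
  simp [psi, hrep, coeff_add, coeff_C]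

lemma g_sum (a b : ZMod 4) {n : ℕ} (f : Fin n → Rring a b) :
    g a b (∑ i, f i) = ∑ i, g a b (f i) := by
  simp [g, map_sum, Polynomial.finset_sum_coeff, Finset.sum_add_distrib]

/-- key pairing identity -/
lemma pairing_eq (a b : ZMod 4) (hab : a + b = 2) (u v : Rring a b) :
    (psi a b u).1 * (psi a b v).1 + (psi a b u).2 * (psi a b v).2 = g a b (u * v) := by
  obtain ⟨u0, u1, rfl⟩ : ∃ x y, u = e a b x y := ⟨_, _, hsurj a b u⟩
  obtain ⟨v0, v1, rfl⟩ : ∃ x y, v = e a b x y := ⟨_, _, hsurj a b v⟩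
  rw [hmul, psi_e, psi_e, g_e]
  have : (2 : ZMod 4) * (u1 * v1) = (a + b) * (u1 * v1) := by rw [hab]
  ring_nf
  linear_combination (u1 * v1) * hab.symm

lemma key_zero (a b : ZMod 4) (hab : a + b = 2) (z : Rring a b)
    (h0 : g a b z = 0) (h1 : g a b (w a b * z) = 0) : z = 0 := by
  obtain ⟨z0, z1, rfl⟩ : ∃ x y, z = e a b x y := ⟨_, _, hsurj a b z⟩
  have hw : w a b = e a b 0 1 := by simp [e]
  rw [g_e] at h0
  rw [hw, hmul, g_e] at h1
  have hz1 : z1 = 0 := by linear_combination h1 - h0 - z1 * hab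
  have hz0 : z0 = 0 := by linear_combination h0 - hz1
  simp [hz0, hz1, e]

/-- If `C` is a self-dual linear code over `R_j` for `j ∈ {2, 2ω}`, then its Gray
image is a self-dual code over `Z₄`. -/
theorem stmt13 (a b : ZMod 4) (hj : (a, b) = (2, 0) ∨ (a, b) = (0, 2)) (n : ℕ)
    (Ccode : Submodule (Rring a b) (Fin n → Rring a b))
    (hsd : (Ccode : Set (Fin n → Rring a b)) =
      dualR a b n (Ccode : Set (Fin n → Rring a b))) :
    Psi a b n '' (Ccode : Set (Fin n → Rring a b)) =
      dualZ n (Psi a b n '' (Ccode : Set (Fin n → Rring a b))) := by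
  have hab : a + b = 2 := by
    rcases hj with h | h <;> · obtain ⟨rfl, rfl⟩ := Prod.mk.injEq .. ▸ Prod.ext_iff.mp h; decide
  have pair_sum : ∀ u v : Fin n → Rring a b,
      ∑ i, ((Psi a b n u i).1 * (Psi a b n v i).1 + (Psi a b n u i).2 * (Psi a b n v i).2)
        = g a b (∑ i, u i * v i) := by
    intro u v
    rw [g_sum]
    exact Finset.sum_congr rfl fun i _ => pairing_eq a b hab (u i) (v i)
  ext y
  constructor
  · rintro ⟨u, hu, rfl⟩
    intro x hx
    obtain ⟨v, hv, rfl⟩ := hx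
    rw [pair_sum]
    have : u ∈ dualR a b n (Ccode : Set (Fin n → Rring a b)) := hsd ▸ hu
    rw [this v hv]
    simp [g, map_zero]
  · intro hy
    set u : Fin n → Rring a b := fun i => e a b ((y i).2 - (y i).1) ((y i).1) with hu
    have hPsiu : Psi a b n u = y := by
      funext i
      simp [Psi, hu, psi_e]
    have humem : u ∈ (Ccode : Set (Fin n → Rring a b)) := by
      rw [hsd]
      intro c hc
      apply key_zero a b hab _ ?_ ?_
      · rw [← pair_sum]
        have h := hy (Psi a b n c) ⟨c, hc, rfl⟩
        rw [← hPsiu] at h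
        exact h
      · have hwc : w a b • c ∈ Ccode := Ccode.smul_mem _ hc
        have h := hy (Psi a b n (w a b • c)) ⟨_, hwc, rfl⟩
        rw [← hPsiu] at h
        have hsum : w a b * ∑ i, u i * c i = ∑ i, u i * ((w a b • c) i) := by
          rw [Finset.mul_sum]
          exact Finset.sum_congr rfl fun i _ => by
            simp only [Pi.smul_apply, smul_eq_mul]; ring
        rw [hsum, ← pair_sum]
        exact h
    exact ⟨u, humem, hPsiu⟩
end
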